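/- For integers n ≥ 1, the logarithmic-derivative identity P_n'(z; β−1, α+1)/P_n(z; β−1, α+1) = (n/z)[1 − ((1+α)/(n−1+β)) · P_{n−1}(z; β−1, α+2)/P_n(z; β−1, α+1)] holds; equivalently, z P_n'(z; β−1, α+1) = n P_n(z; β−1, α+1) − (n(1+α)/(n−1+β)) P_{n−1}(z; β−1, α+2) as a polynomial identity. -/

import Mathlib

open Finset

noncomputable def poch (a : ℝ) (k : ℕ) : ℝ := ∏ i ∈ Finset.range k, (a + i)

noncomputable def HR (n : ℕ) (α β : ℝ) (z : ℝ) : ℝ :=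
  (poch β n / poch (α + 1) n) *
    ∑ k ∈ Finset.range (n + 1),
      (poch (-(n : ℝ)) k * poch (α + 1) k) / ((k.factorial : ℝ) * poch (1 - β - (n : ℝ)) k) * z ^ k

lemma poch_succ (a : ℝ) (k : ℕ) : poch a (k+1) = poch a k * (a + k) := by
  simp [poch, Finset.prod_range_succ]

lemma poch_succ' (a : ℝ) (k : ℕ) : poch a (k+1) = a * poch (a+1) k := by
  induction k with
  | zero => simp [poch]
  | succ k ih =>
    rw [poch_succ, ih, poch_succ]; push_cast; ring

lemma poch_ne_zero {a : ℝ} {k : ℕ} (h : ∀ j < k, a + (j:ℝ) ≠ 0) : poch a k ≠ 0 :=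
  Finset.prod_ne_zero_iff.2 fun i hi => h i (Finset.mem_range.1 hi)

lemma keyB (m : ℕ) : ∀ k, k ≤ m →
    ((m:ℝ)+1-k) * poch (-((m:ℝ)+1)) k = ((m:ℝ)+1) * poch (-(m:ℝ)) k := by
  intro k
  induction k with
  | zero => intro _; simp [poch]
  | succ k ih =>
    intro hk
    have hk' : k ≤ m := Nat.le_of_succ_le hk
    rw [poch_succ, poch_succ]
    push_cast
    linear_combination ((k:ℝ) - m) * ih hk'

lemma sum_step (m : ℕ) (c1 c2 : ℕ → ℝ) (r : ℝ) (z : ℝ)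
    (h : ∀ k, k ≤ m → (((m:ℝ)+1) - k) * c1 k = r * c2 k) :
    ∑ k ∈ Finset.range (m+1+1), (k:ℝ) * c1 k * z^k
      = ((m:ℝ)+1) * ∑ k ∈ Finset.range (m+1+1), c1 k * z^k
        - r * ∑ k ∈ Finset.range (m+1), c2 k * z^k := by
  have h1 : ∑ k ∈ Finset.range (m+1), (k:ℝ) * c1 k * z^k
      = ∑ k ∈ Finset.range (m+1), ((((m:ℝ)+1) * (c1 k * z^k)) - r * (c2 k * z^k)) := by
    refine Finset.sum_congr rfl fun k hk => ?_
    have := h k (Nat.lt_succ_iff.mp (Finset.mem_range.mp hk))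
    linear_combination (-(z^k)) * this
  rw [Finset.sum_range_succ, h1, Finset.sum_sub_distrib, ← Finset.mul_sum, ← Finset.mul_sum,
      Finset.sum_range_succ (n := m+1)]
  push_cast
  ring


lemma HR_val (N : ℕ) (a b z : ℝ) :
    HR N a b z = ∑ k ∈ Finset.range (N+1),
      (poch b N / poch (a+1) N *
        (poch (-(N:ℝ)) k * poch (a+1) k / ((k.factorial:ℝ) * poch (1-b-(N:ℝ)) k))) * z^k := by
  unfold HR
  rw [Finset.mul_sum]
  exact Finset.sum_congr rfl fun k _ => by ring

lemma deriv_poly (c : ℕ → ℝ) (N : ℕ) (z : ℝ) :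
    z * deriv (fun t => ∑ k ∈ Finset.range N, c k * t^k) z
      = ∑ k ∈ Finset.range N, (k:ℝ) * c k * z^k := by
  rw [deriv_fun_sum (fun k _ => (differentiableAt_pow k).const_mul _)]
  rw [Finset.mul_sum]
  refine Finset.sum_congr rfl fun k _ => ?_
  rw [deriv_const_mul _ (differentiableAt_pow k), deriv_pow_field]
  cases k with
  | zero => simp
  | succ j => simp only [Nat.add_sub_cancel, pow_succ]; push_cast; ring

lemma coeff_key (m : ℕ) (α β : ℝ)
    (hden : ((m:ℝ)+1) - 1 + β ≠ 0)
    (hβ : ∀ j < m + 1, α + 1 + (j : ℝ) ≠ 0)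
    (hα : ∀ j < m + 1, β + (j : ℝ) ≠ 0)
    (hd : ∀ j < m + 1, 1 - (α + 1) - ((m:ℝ)+1) + (j : ℝ) ≠ 0) :
    ∀ k, k ≤ m → (((m:ℝ)+1) - k) *
      (poch (α+1) (m+1) / poch β (m+1) *
        (poch (-((m:ℝ)+1)) k * poch β k / ((k.factorial:ℝ) * poch (-α-((m:ℝ)+1)) k)))
    = (((m:ℝ)+1)*(1+α)/(((m:ℝ)+1)-1+β)) *
      (poch (α+2) m / poch β m *
        (poch (-(m:ℝ)) k * poch β k / ((k.factorial:ℝ) * poch (-α-((m:ℝ)+1)) k))) := by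
  intro k hk
  have hB := keyB m k hk
  have e1 : poch (α+1) (m+1) = (α+1) * poch (α+2) m := by
    rw [poch_succ', show α+1+1 = α+2 from by ring]
  have e2 : poch β (m+1) = poch β m * (β + m) := poch_succ β m
  have hQm : poch β m ≠ 0 := poch_ne_zero fun j hj => hα j (Nat.lt_succ_of_lt hj)
  have hβm : β + (m:ℝ) ≠ 0 := hα m (Nat.lt_succ_self m)
  have hQk : poch β k ≠ 0 := poch_ne_zero fun j hj => hα j (hj.trans_le (Nat.le_succ_of_le hk))
  have hfac : (k.factorial : ℝ) ≠ 0 := Nat.cast_ne_zero.2 k.factorial_ne_zero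
  have hDk : poch (-α-((m:ℝ)+1)) k ≠ 0 := by
    refine poch_ne_zero fun j hj => ?_
    have := hd j (hj.trans_le (Nat.le_succ_of_le hk))
    intro hc; apply this; linarith
  have hden' : ((m:ℝ)+β) ≠ 0 := by intro hc; apply hden; linarith
  rw [e1, e2]
  have hm1 : ((m:ℝ)+1) - 1 + β = (m:ℝ) + β := by ring
  rw [hm1]
  set P2 := poch (α+2) m with hP2
  set Qm := poch β m with hQm'
  set Qk := poch β k with hQk'
  set Pk := poch (-((m:ℝ)+1)) k with hPk
  set Rk := poch (-(m:ℝ)) k with hRk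
  set Dk := poch (-α-((m:ℝ)+1)) k with hDk'
  set F := (k.factorial : ℝ) with hF
  have hkm : (k:ℝ) ≤ m := Nat.cast_le.2 hk
  have hmk : ((m:ℝ)+1) - (k:ℝ) ≠ 0 := by intro hc; linarith
  have hPk2 : Pk = ((m:ℝ)+1) * Rk / (((m:ℝ)+1) - (k:ℝ)) := by
    rw [eq_div_iff hmk]; linear_combination hB
  rw [hPk2]
  field_simp
  ring

theorem hr_log_derivative_identity (n : ℕ) (hn : 1 ≤ n) (α β : ℝ)
    (hden : (n : ℝ) - 1 + β ≠ 0)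
    (hβ : ∀ j < n, α + 1 + (j : ℝ) ≠ 0)
    (hα : ∀ j < n, β + (j : ℝ) ≠ 0)
    (hd : ∀ j < n, 1 - (α + 1) - (n : ℝ) + (j : ℝ) ≠ 0) :
    ∀ z : ℝ,
      z * deriv (fun t => HR n (β - 1) (α + 1) t) z
      = (n : ℝ) * HR n (β - 1) (α + 1) z
        - ((n : ℝ) * (1 + α) / ((n : ℝ) - 1 + β)) * HR (n - 1) (β - 1) (α + 2) z := by
  obtain ⟨m, rfl⟩ : ∃ m, n = m + 1 := ⟨n - 1, (Nat.succ_pred_eq_of_pos hn).symm⟩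
  intro z
  simp only [Nat.add_sub_cancel]
  simp only [HR_val]
  rw [deriv_poly]
  simp only [show β - 1 + 1 = β from by ring]
  push_cast
  push_cast at hden hd
  simp only [show (1:ℝ) - (α + 1) - ((m:ℝ) + 1) = -α - ((m:ℝ)+1) from by ring,
             show (1:ℝ) - (α + 2) - (m:ℝ) = -α - ((m:ℝ)+1) from by ring]
  exact sum_step m
    (fun k => poch (α+1) (m+1) / poch β (m+1) *
      (poch (-((m:ℝ)+1)) k * poch β k / ((k.factorial:ℝ) * poch (-α-((m:ℝ)+1)) k)))
    (fun k => poch (α+2) m / poch β m *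
      (poch (-(m:ℝ)) k * poch β k / ((k.factorial:ℝ) * poch (-α-((m:ℝ)+1)) k)))
    (((m:ℝ)+1)*(1+α)/(((m:ℝ)+1)-1+β)) z
    (coeff_key m α β (by push_cast; exact hden) hβ hα (by push_cast; exact hd))
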